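/- Let N be a Nijenhuis operator on a pre-Lie algebra (g, ·). Then the deformed multiplication x·_N y = N(x)·y + x·N(y) − N(x·y) is again a pre-Lie algebra multiplication on g, and N is an algebra homomorphism from (g, ·_N) to (g, ·). -/
import Mathlib


/-- The pre-Lie identity for a (bilinear) multiplication given as a plain map. -/
def PreLieFn {g : Type*} [AddCommGroup g] (m : g → g → g) : Prop :=
  ∀ x y z : g, m (m x y) z - m x (m y z) = m (m y x) z - m y (m x z)

/-- The Nijenhuis identity for an operator `N` with respect to a multiplication `m`. -/
def NijFn {g : Type*} [AddCommGroup g] (m : g → g → g) (N : g → g) : Prop :=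
  ∀ x y : g, m (N x) (N y) = N (m (N x) y + m x (N y) - N (m x y))

/-- The multiplication deformed by an operator `N`. -/
def deform {g : Type*} [AddCommGroup g] (m : g → g → g) (N : g → g) : g → g → g :=
  fun x y => m (N x) y + m x (N y) - N (m x y)

/-- The associator of a multiplication. -/
def assocFn {g : Type*} [AddCommGroup g] (m : g → g → g) (a b c : g) : g :=
  m (m a b) c - m a (m b c)

/-- Key identity: the associator of the deformed product in terms of the original associator. -/
lemma deform_assoc_key {K g : Type*} [Field K] [AddCommGroup g] [Module K g]
    (m : g →ₗ[K] g →ₗ[K] g) (N : g →ₗ[K] g)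
    (hN : NijFn (fun x y => m x y) N) (a b c : g) :
    assocFn (deform (fun x y => m x y) N) a b c
      = assocFn (fun x y => m x y) (N a) (N b) c
        + assocFn (fun x y => m x y) (N a) b (N c)
        + assocFn (fun x y => m x y) a (N b) (N c)
        - N (assocFn (fun x y => m x y) (N a) b c
            + assocFn (fun x y => m x y) a (N b) c
            + assocFn (fun x y => m x y) a b (N c))
        + N (N (assocFn (fun x y => m x y) a b c)) := by
  have hN' : ∀ x y : g, m (N x) (N y) = N (m (N x) y + m x (N y) - N (m x y)) := hN
  simp only [assocFn, deform, map_add, map_sub, LinearMap.add_apply, LinearMap.sub_apply, hN']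
  abel

theorem deformed_preLie_and_hom {K g : Type*} [Field K] [AddCommGroup g] [Module K g]
    (m : g →ₗ[K] g →ₗ[K] g) (hm : PreLieFn (fun x y => m x y))
    (N : g →ₗ[K] g) (hN : NijFn (fun x y => m x y) N) :
    PreLieFn (deform (fun x y => m x y) N) ∧
    (∀ x y : g, N (deform (fun x y => m x y) N x y) = m (N x) (N y)) := by
  have hm' : ∀ x y z : g,
      assocFn (fun x y => m x y) x y z = assocFn (fun x y => m x y) y x z := hm
  constructor
  · intro x y z
    have L := deform_assoc_key m N hN x y z
    have R := deform_assoc_key m N hN y x z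
    have goal' : assocFn (deform (fun x y => m x y) N) x y z
        = assocFn (deform (fun x y => m x y) N) y x z := by
      rw [L, R]
      have e1 : assocFn (fun x y => m x y) (N y) x z
          + assocFn (fun x y => m x y) y (N x) z
          + assocFn (fun x y => m x y) y x (N z)
          = assocFn (fun x y => m x y) (N x) y z
            + assocFn (fun x y => m x y) x (N y) z
            + assocFn (fun x y => m x y) x y (N z) := by
        rw [hm' (N y) x z, hm' y (N x) z, hm' y x (N z)]
        abel
      have e2 : assocFn (fun x y => m x y) y x z = assocFn (fun x y => m x y) x y z :=
        hm' y x z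
      rw [e1, e2, hm' (N y) (N x) z, hm' (N y) x (N z), hm' y (N x) (N z)]
      abel
    simpa [assocFn] using goal'
  · intro x y
    have := hN x y
    simp only [deform]
    exact (this).symm
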